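/- Assume (A0)–(A3) and (A5) hold. Suppose v*, v ∈ C(Ω̄) are nonnegative, v* ≢ 0, v ≢ 0, and satisfy DP[v](x) + v(x) g(x, F₊(x,v(x)), v(x)) ≥ 0 for all x ∈ Ω̄ and DP[v*](x) + v*(x) g(x, F₊(x,v*(x)), v*(x)) ≤ 0 for all x ∈ Ω̄, where D > 0. Then either v* > v everywhere on Ω̄, or v* = v on Ω̄. -/

import Mathlib

open MeasureTheory Filter BoundedContinuousFunction

open Set Topology

set_option maxHeartbeats 1000000

open Set Filter MeasureTheory Topology

lemma aux_mvt (h h' : ℝ → ℝ)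
    (hd : ∀ u ∈ Set.Ici (0:ℝ), HasDerivWithinAt h (h' u) (Set.Ici 0) u)
    {a b : ℝ} (ha : 0 ≤ a) (hab : a < b) :
    ∃ ξ ∈ Set.Ioo a b, h b - h a = h' ξ * (b - a) := by
  have hsub : Set.Icc a b ⊆ Set.Ici (0:ℝ) := fun y hy => ha.trans hy.1
  have hc : ContinuousOn h (Set.Icc a b) := fun u hu =>
    ((hd u (hsub hu)).continuousWithinAt).mono hsub
  have hda : ∀ u ∈ Set.Ioo a b, HasDerivAt h (h' u) u := fun u hu =>
    (hd u (le_of_lt (lt_of_le_of_lt ha hu.1))).hasDerivAt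
      (Ici_mem_nhds (lt_of_le_of_lt ha hu.1))
  obtain ⟨c, hc1, hc2⟩ := exists_hasDerivAt_eq_slope h h' hab hc hda
  refine ⟨c, hc1, ?_⟩
  have hb0 : b - a ≠ 0 := by linarith
  field_simp at hc2
  linarith [hc2]

lemma aux_det (a0 b0 c0 d0 a1 b1 c1 d1 η : ℝ) (hη : 0 < η) (hη1 : η ≤ 1)
    (hdet : 2 * (|a0| + |b0| + |c0| + |d0| + 2) * η ≤ a0 * b0 - c0 * d0)
    (ha : |a1 - a0| ≤ η) (hb : |b1 - b0| ≤ η) (hc : |c1 - c0| ≤ η) (hd : |d1 - d0| ≤ η) :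
    0 < a1 * b1 - c1 * d1 := by
  obtain ⟨ha1, ha2⟩ := abs_le.1 ha
  obtain ⟨hb1, hb2⟩ := abs_le.1 hb
  obtain ⟨hc1, hc2⟩ := abs_le.1 hc
  obtain ⟨hd1, hd2⟩ := abs_le.1 hd
  have haa := le_abs_self a0; have haa' := neg_abs_le a0
  have hbb := le_abs_self b0; have hbb' := neg_abs_le b0
  have hcc := le_abs_self c0; have hcc' := neg_abs_le c0
  have hdd := le_abs_self d0; have hdd' := neg_abs_le d0
  nlinarith [mul_self_nonneg (a1 - a0), mul_self_nonneg (b1 - b0),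
    mul_self_nonneg (c1 - c0), mul_self_nonneg (d1 - d0),
    mul_le_mul_of_nonneg_left hη1 hη.le,
    abs_nonneg a0, abs_nonneg b0, abs_nonneg c0, abs_nonneg d0]

lemma aux_ci (φ : ℝ → ℝ) (a b : ℝ) (hab : a < b) (hc : ContinuousOn φ (Set.Icc a b))
    (hloc : ∀ s, a ≤ s → s < b → ∃ δ > 0, ∀ t, s < t → t ≤ b → t - s < δ → φ t < φ s) :
    φ b < φ a := by
  have key : ∀ s0, a ≤ s0 → s0 < b → ∀ t ∈ Set.Icc s0 b, φ t ≤ φ s0 := by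
    intro s0 hs0a hs0b
    set T : Set ℝ := {t | t ∈ Set.Icc s0 b ∧ ∀ r ∈ Set.Icc s0 t, φ r ≤ φ s0} with hT
    have hT0 : s0 ∈ T := ⟨⟨le_refl _, hs0b.le⟩, fun r hr => by
      have : r = s0 := le_antisymm hr.2 hr.1
      simp [this]⟩
    have hTne : T.Nonempty := ⟨s0, hT0⟩
    have hTbdd : BddAbove T := ⟨b, fun t ht => ht.1.2⟩
    set c := sSup T with hcdef
    have hc1 : s0 ≤ c := le_csSup hTbdd hT0
    have hc2 : c ≤ b := csSup_le hTne (fun t ht => ht.1.2)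
    have hbelow : ∀ r, s0 ≤ r → r < c → φ r ≤ φ s0 := by
      intro r hr hrc
      obtain ⟨t, htT, hrt⟩ := exists_lt_of_lt_csSup hTne hrc
      exact htT.2 r ⟨hr, hrt.le⟩
    have hcle : φ c ≤ φ s0 := by
      rcases eq_or_lt_of_le hc1 with h | h
      · rw [← h]
      · have hmem : c ∈ Set.Icc a b := ⟨hs0a.trans hc1, hc2⟩
        have hcw : ContinuousWithinAt φ (Set.Ico s0 c) c :=
          (hc c hmem).mono (fun y hy => ⟨hs0a.trans hy.1, hy.2.le.trans hc2⟩)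
        have hne : (𝓝[Set.Ico s0 c] c).NeBot := by
          refine mem_closure_iff_nhdsWithin_neBot.1 ?_
          rw [closure_Ico (ne_of_lt h)]
          exact ⟨hc1, le_refl _⟩
        refine le_of_tendsto hcw ?_
        filter_upwards [self_mem_nhdsWithin] with r hr
        exact hbelow r hr.1 hr.2
    have hcT : c ∈ T := ⟨⟨hc1, hc2⟩, fun r hr => by
      rcases eq_or_lt_of_le hr.2 with h | h
      · rw [h]; exact hcle
      · exact hbelow r hr.1 h⟩
    have hcb : c = b := by
      by_contra hne
      have hcb' : c < b := lt_of_le_of_ne hc2 hne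
      obtain ⟨δ, hδ, hδp⟩ := hloc c (hs0a.trans hc1) hcb'
      set t := min (c + δ / 2) b with htdef
      have hct : c < t := lt_min (by linarith) hcb'
      have htb : t ≤ b := min_le_right _ _
      have htδ : t - c < δ := by
        have : t ≤ c + δ / 2 := min_le_left _ _
        linarith
      have htT : t ∈ T := by
        refine ⟨⟨hc1.trans hct.le, htb⟩, fun r hr => ?_⟩
        rcases le_or_gt r c with h | h
        · exact hcT.2 r ⟨hr.1, h⟩
        · have : φ r < φ c := hδp r h (hr.2.trans htb) (by
            have : r ≤ t := hr.2
            linarith)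
          linarith [hcle]
      have : t ≤ c := le_csSup hTbdd htT
      linarith
    intro t ht
    exact hcT.2 t (by rw [hcb]; exact ht)
  obtain ⟨δ, hδ, hδp⟩ := hloc a (le_refl _) hab
  rcases le_or_gt b (a + δ / 2) with h | h
  · exact hδp b hab (le_refl _) (by linarith)
  · have h1 : φ (a + δ / 2) < φ a := hδp _ (by linarith) (by linarith) (by linarith)
    have h2 : φ b ≤ φ (a + δ / 2) :=
      key (a + δ / 2) (by linarith) h b ⟨h.le, le_refl _⟩
    linarith

lemma aux_G (f g fu fv gu gv : ℝ → ℝ → ℝ) (F : ℝ → ℝ)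
    (hdfu : ∀ v ∈ Set.Ici (0:ℝ), ∀ u ∈ Set.Ici (0:ℝ),
      HasDerivWithinAt (fun s => f s v) (fu u v) (Set.Ici 0) u)
    (hdfv : ∀ u ∈ Set.Ici (0:ℝ), ∀ v ∈ Set.Ici (0:ℝ),
      HasDerivWithinAt (fun s => f u s) (fv u v) (Set.Ici 0) v)
    (hdgu : ∀ v ∈ Set.Ici (0:ℝ), ∀ u ∈ Set.Ici (0:ℝ),
      HasDerivWithinAt (fun s => g s v) (gu u v) (Set.Ici 0) u)
    (hdgv : ∀ u ∈ Set.Ici (0:ℝ), ∀ v ∈ Set.Ici (0:ℝ),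
      HasDerivWithinAt (fun s => g u s) (gv u v) (Set.Ici 0) v)
    (hfu : ∀ u ∈ Set.Ici (0:ℝ), ∀ v ∈ Set.Ici (0:ℝ), fu u v < 0)
    (hfv : ∀ u ∈ Set.Ici (0:ℝ), ∀ v ∈ Set.Ici (0:ℝ), fv u v < 0)
    (hgv : ∀ u ∈ Set.Ici (0:ℝ), ∀ v ∈ Set.Ici (0:ℝ), gv u v < 0)
    (hdet : ∀ u ∈ Set.Ici (0:ℝ), ∀ v ∈ Set.Ici (0:ℝ), fv u v * gu u v < fu u v * gv u v)
    (hfuc : ContinuousOn (fun q : ℝ × ℝ => fu q.1 q.2) (Set.Ici 0 ×ˢ Set.Ici 0))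
    (hfvc : ContinuousOn (fun q : ℝ × ℝ => fv q.1 q.2) (Set.Ici 0 ×ˢ Set.Ici 0))
    (hguc : ContinuousOn (fun q : ℝ × ℝ => gu q.1 q.2) (Set.Ici 0 ×ˢ Set.Ici 0))
    (hgvc : ContinuousOn (fun q : ℝ × ℝ => gv q.1 q.2) (Set.Ici 0 ×ˢ Set.Ici 0))
    (hgc : ContinuousOn (fun q : ℝ × ℝ => g q.1 q.2) (Set.Ici 0 ×ˢ Set.Ici 0))
    (hFc : ContinuousOn F (Set.Ici 0))
    (hF0 : ∀ v ∈ Set.Ici (0:ℝ), f (F v) v = 0) :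
    StrictAntiOn (fun s => g (max (F s) 0) s) (Set.Ici 0) := by
  -- strict antitonicity of slices
  have fanti_u : ∀ v, 0 ≤ v → ∀ a, 0 ≤ a → ∀ b, a < b → f b v < f a v := by
    intro v hv a ha b hab
    obtain ⟨ξ, hξ, heq⟩ := aux_mvt (fun u => f u v) (fun u => fu u v)
      (fun u hu => hdfu v hv u hu) ha hab
    have := hfu ξ (le_of_lt (lt_of_le_of_lt ha hξ.1)) v hv
    nlinarith
  have fanti_v : ∀ u, 0 ≤ u → ∀ a, 0 ≤ a → ∀ b, a < b → f u b < f u a := by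
    intro u hu a ha b hab
    obtain ⟨ξ, hξ, heq⟩ := aux_mvt (fun s => f u s) (fun s => fv u s)
      (fun s hs => hdfv u hu s hs) ha hab
    have := hfv u hu ξ (le_of_lt (lt_of_le_of_lt ha hξ.1))
    nlinarith
  have ganti_v : ∀ u, 0 ≤ u → ∀ a, 0 ≤ a → ∀ b, a < b → g u b < g u a := by
    intro u hu a ha b hab
    obtain ⟨ξ, hξ, heq⟩ := aux_mvt (fun s => g u s) (fun s => gv u s)
      (fun s hs => hdgv u hu s hs) ha hab
    have := hgv u hu ξ (le_of_lt (lt_of_le_of_lt ha hξ.1))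
    nlinarith
  -- F is strictly decreasing as long as it is nonnegative
  have L1 : ∀ s t, 0 ≤ s → s < t → 0 ≤ F s → F t < F s := by
    intro s t hs hst hFs
    by_contra hle
    push_neg at hle
    have hFt : (0:ℝ) ≤ F t := hFs.trans hle
    have h1 : f (F t) s ≤ f (F s) s := by
      rcases eq_or_lt_of_le hle with h | h
      · rw [h]
      · exact (fanti_u s hs (F s) hFs (F t) h).le
    have h2 : f (F t) t < f (F t) s := fanti_v (F t) hFt s hs t hst
    have e1 : f (F s) s = 0 := hF0 s hs
    have e2 : f (F t) t = 0 := hF0 t (hs.trans hst.le)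
    linarith
  -- once F is nonpositive it stays nonpositive
  have L2 : ∀ s t, 0 ≤ s → s ≤ t → F s ≤ 0 → F t ≤ 0 := by
    intro s t hs hst hFs
    by_contra hpos
    push_neg at hpos
    have hsubc : ContinuousOn F (Set.Icc s t) := hFc.mono (fun r hr => hs.trans hr.1)
    have h0 : (0:ℝ) ∈ Set.Icc (F s) (F t) := ⟨hFs, hpos.le⟩
    obtain ⟨c, hcmem, hFc0⟩ := intermediate_value_Icc hst hsubc h0
    rcases eq_or_lt_of_le hcmem.2 with h | h
    · rw [h] at hFc0; linarith
    · have := L1 c t (hs.trans hcmem.1) h (le_of_eq hFc0.symm)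
      rw [hFc0] at this; linarith
  -- Key positive region lemma
  have KPR : ∀ a b, 0 ≤ a → a < b → (∀ r ∈ Set.Icc a b, 0 ≤ F r) →
      g (F b) b < g (F a) a := by
    intro a b ha hab hreg
    have hφc : ContinuousOn (fun r => g (F r) r) (Set.Icc a b) := by
      have hmap : Set.MapsTo (fun r => ((F r, r) : ℝ × ℝ)) (Set.Icc a b)
          (Set.Ici 0 ×ˢ Set.Ici 0) := fun r hr => ⟨hreg r hr, ha.trans hr.1⟩
      exact hgc.comp ((hFc.mono (fun r hr => ha.trans hr.1)).prodMk continuousOn_id) hmap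
    have hloc : ∀ s, a ≤ s → s < b →
        ∃ δ > 0, ∀ t, s < t → t ≤ b → t - s < δ → g (F t) t < g (F s) s := by
      intro s hsa hsb
      have hs0 : (0:ℝ) ≤ s := ha.trans hsa
      have hu0nn : 0 ≤ F s := hreg s ⟨hsa, hsb.le⟩
      have hq0 : ((F s, s) : ℝ × ℝ) ∈ Set.Ici (0:ℝ) ×ˢ Set.Ici (0:ℝ) := ⟨hu0nn, hs0⟩
      have hdet0 : 0 < fu (F s) s * gv (F s) s - fv (F s) s * gu (F s) s := by
        have := hdet (F s) hu0nn s hs0; linarith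
      set L : ℝ := |fu (F s) s| + |gv (F s) s| + |fv (F s) s| + |gu (F s) s| + 2 with hLdef
      have hLpos : 0 < L := by positivity
      set ep : ℝ := min ((fu (F s) s * gv (F s) s - fv (F s) s * gu (F s) s) / (2 * L)) 1
        with hepdef
      have heppos : 0 < ep := lt_min (by positivity) one_pos
      have hep1 : ep ≤ 1 := min_le_right _ _
      have hepdet : 2 * L * ep ≤ fu (F s) s * gv (F s) s - fv (F s) s * gu (F s) s := by
        have h1 : ep ≤ (fu (F s) s * gv (F s) s - fv (F s) s * gu (F s) s) / (2 * L) :=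
          min_le_left _ _
        rw [le_div_iff₀ (by positivity)] at h1
        linarith only [h1]
      have hget : ∀ (h : ℝ → ℝ → ℝ),
          ContinuousOn (fun q : ℝ × ℝ => h q.1 q.2) (Set.Ici 0 ×ˢ Set.Ici 0) →
          ∃ r > 0, ∀ q : ℝ × ℝ, q ∈ Set.Ici (0:ℝ) ×ˢ Set.Ici (0:ℝ) →
            dist q (F s, s) < r → |h q.1 q.2 - h (F s) s| ≤ ep := by
        intro h hc'
        have h2 := hc' (F s, s) hq0
        rw [Metric.continuousWithinAt_iff] at h2
        obtain ⟨r, hr, hrp⟩ := h2 ep heppos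
        refine ⟨r, hr, fun q hq hdq => ?_⟩
        have := hrp hq hdq
        rw [Real.dist_eq] at this
        exact this.le
      obtain ⟨r1, hr1, hp1⟩ := hget fu hfuc
      obtain ⟨r2, hr2, hp2⟩ := hget fv hfvc
      obtain ⟨r3, hr3, hp3⟩ := hget gu hguc
      obtain ⟨r4, hr4, hp4⟩ := hget gv hgvc
      set r : ℝ := min (min r1 r2) (min r3 r4) with hrdef
      have hrpos : 0 < r := lt_min (lt_min hr1 hr2) (lt_min hr3 hr4)
      have hrle1 : r ≤ r1 := (min_le_left _ _).trans (min_le_left _ _)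
      have hrle2 : r ≤ r2 := (min_le_left _ _).trans (min_le_right _ _)
      have hrle3 : r ≤ r3 := (min_le_right _ _).trans (min_le_left _ _)
      have hrle4 : r ≤ r4 := (min_le_right _ _).trans (min_le_right _ _)
      have hFcw := hFc s hs0
      rw [Metric.continuousWithinAt_iff] at hFcw
      obtain ⟨δ1, hδ1, hδ1p⟩ := hFcw (r / 2) (by positivity)
      refine ⟨min δ1 (r / 2), lt_min hδ1 (by positivity), ?_⟩
      intro t hst htb htδ
      show g (F t) t < g (F s) s
      have ht0 : (0:ℝ) ≤ t := hs0.trans hst.le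
      have htmem : t ∈ Set.Icc a b := ⟨hsa.trans hst.le, htb⟩
      have htreg : 0 ≤ F t := hreg t htmem
      have hu2lt : F t < F s := L1 s t hs0 hst hu0nn
      have htd : dist t s < δ1 := by
        rw [Real.dist_eq, abs_of_pos (by linarith only [hst])]
        exact lt_of_lt_of_le htδ (min_le_left _ _)
      have hFtd : |F t - F s| < r / 2 := by
        have := hδ1p ht0 htd
        rwa [Real.dist_eq] at this
      have htr : |t - s| < r / 2 := by
        rw [abs_of_pos (by linarith only [hst])]
        exact lt_of_lt_of_le htδ (min_le_right _ _)
      have hFtd' := abs_lt.1 hFtd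
      have htr' := abs_lt.1 htr
      have hdist : ∀ u' v' : ℝ, F t ≤ u' → u' ≤ F s → s ≤ v' → v' ≤ t →
          dist ((u', v') : ℝ × ℝ) (F s, s) < r := by
        intro u' v' h1 h2 h3 h4
        rw [Prod.dist_eq]
        apply max_lt
        · rw [Real.dist_eq, abs_lt]
          constructor <;> linarith only [hFtd'.1, hFtd'.2, h1, h2, h3, h4, hrpos]
        · rw [Real.dist_eq, abs_lt]
          constructor <;> linarith only [htr'.1, htr'.2, h1, h2, h3, h4, hrpos]
      obtain ⟨ξ1, hξ1, hmvt1⟩ := aux_mvt (fun u => f u t) (fun u => fu u t)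
        (fun u hu => hdfu t ht0 u hu) htreg hu2lt
      obtain ⟨v1, hv1, hmvt2⟩ := aux_mvt (fun rr => f (F s) rr) (fun rr => fv (F s) rr)
        (fun rr hrr => hdfv (F s) hu0nn rr hrr) hs0 hst
      obtain ⟨ξ2, hξ2, hmvt3⟩ := aux_mvt (fun u => g u t) (fun u => gu u t)
        (fun u hu => hdgu t ht0 u hu) htreg hu2lt
      obtain ⟨v2, hv2, hmvt4⟩ := aux_mvt (fun rr => g (F s) rr) (fun rr => gv (F s) rr)
        (fun rr hrr => hdgv (F s) hu0nn rr hrr) hs0 hst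
      have e1 : f (F s) s = 0 := hF0 s hs0
      have e2 : f (F t) t = 0 := hF0 t ht0
      have hA : |fu ξ1 t - fu (F s) s| ≤ ep :=
        hp1 (ξ1, t) ⟨htreg.trans hξ1.1.le, ht0⟩
          (lt_of_lt_of_le (hdist ξ1 t hξ1.1.le hξ1.2.le hst.le (le_refl t)) hrle1)
      have hB : |gv (F s) v2 - gv (F s) s| ≤ ep :=
        hp4 (F s, v2) ⟨hu0nn, hs0.trans hv2.1.le⟩
          (lt_of_lt_of_le (hdist (F s) v2 hu2lt.le (le_refl _) hv2.1.le hv2.2.le) hrle4)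
      have hC : |fv (F s) v1 - fv (F s) s| ≤ ep :=
        hp2 (F s, v1) ⟨hu0nn, hs0.trans hv1.1.le⟩
          (lt_of_lt_of_le (hdist (F s) v1 hu2lt.le (le_refl _) hv1.1.le hv1.2.le) hrle2)
      have hD : |gu ξ2 t - gu (F s) s| ≤ ep :=
        hp3 (ξ2, t) ⟨htreg.trans hξ2.1.le, ht0⟩
          (lt_of_lt_of_le (hdist ξ2 t hξ2.1.le hξ2.2.le hst.le (le_refl t)) hrle3)
      have hkey : 0 < fu ξ1 t * gv (F s) v2 - fv (F s) v1 * gu ξ2 t := by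
        apply aux_det (fu (F s) s) (gv (F s) s) (fv (F s) s) (gu (F s) s)
          _ _ _ _ ep heppos hep1 _ hA hB hC hD
        rw [hLdef] at hepdet
        linarith only [hepdet]
      have hrel : fu ξ1 t * (F s - F t) = fv (F s) v1 * (t - s) := by
        rw [e2] at hmvt1; rw [e1] at hmvt2
        linarith only [hmvt1, hmvt2]
      have hgdiff : g (F t) t - g (F s) s
          = gv (F s) v2 * (t - s) - gu ξ2 t * (F s - F t) := by linarith only [hmvt3, hmvt4]
      have hfuneg : fu ξ1 t < 0 := hfu ξ1 (htreg.trans hξ1.1.le) t ht0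
      have hident : fu ξ1 t * (g (F t) t - g (F s) s)
          = (t - s) * (fu ξ1 t * gv (F s) v2 - fv (F s) v1 * gu ξ2 t) := by
        linear_combination (fu ξ1 t) * hgdiff - (gu ξ2 t) * hrel
      have hTpos : 0 < t - s := by linarith only [hst]
      have h3 : 0 < fu ξ1 t * (g (F t) t - g (F s) s) := by
        rw [hident]; exact mul_pos hTpos hkey
      rcases lt_or_ge (g (F t) t) (g (F s) s) with h | h
      · exact h
      · exfalso
        have h4 : 0 ≤ g (F t) t - g (F s) s := by linarith only [h]
        have h5 := mul_nonneg (neg_nonneg.2 hfuneg.le) h4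
        linarith only [h3, h5]
    exact aux_ci (fun r => g (F r) r) a b hab hφc hloc
  -- final assembly
  intro s1 hs1 s2 hs2 h12
  have hs1' : (0:ℝ) ≤ s1 := hs1
  have hs2' : (0:ℝ) ≤ s2 := hs2
  show g (max (F s2) 0) s2 < g (max (F s1) 0) s1
  by_cases hN : ∃ rr ∈ Set.Icc s1 s2, F rr ≤ 0
  · set N : Set ℝ := Set.Icc s1 s2 ∩ F ⁻¹' Set.Iic 0 with hNdef
    have hNc : IsClosed N :=
      (hFc.mono (fun rr (hrr : rr ∈ Set.Icc s1 s2) => hs1'.trans hrr.1)).preimage_isClosed_of_isClosed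
        isClosed_Icc isClosed_Iic
    obtain ⟨r0, hr0, hr0F⟩ := hN
    have hNne : N.Nonempty := ⟨r0, hr0, hr0F⟩
    have hNbdd : BddBelow N := ⟨s1, fun rr hrr => hrr.1.1⟩
    set c := sInf N with hcdef
    have hcN : c ∈ N := hNc.csInf_mem hNne hNbdd
    have hcmem : c ∈ Set.Icc s1 s2 := hcN.1
    have hcF : F c ≤ 0 := hcN.2
    have hcnn : (0:ℝ) ≤ c := hs1'.trans hcmem.1
    have habove : ∀ t, c < t → F t ≤ 0 := fun t hct => L2 c t hcnn hct.le hcF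
    have hbelow : ∀ rr, s1 ≤ rr → rr < c → 0 < F rr := by
      intro rr hrr hrc
      by_contra hle
      push_neg at hle
      exact absurd (csInf_le hNbdd ⟨⟨hrr, hrc.le.trans hcmem.2⟩, hle⟩) (not_le.2 hrc)
    rcases eq_or_lt_of_le hcmem.1 with hceq | hclt
    · -- c = s1 : F ≤ 0 on all of [s1, s2]
      have hFs1 : F s1 ≤ 0 := by rw [hceq]; exact hcF
      have hFs2 : F s2 ≤ 0 := habove s2 (by rw [← hceq]; exact h12)
      rw [max_eq_right hFs1, max_eq_right hFs2]
      exact ganti_v 0 (le_refl 0) s1 hs1' s2 h12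
    · -- s1 < c
      have hFcge : 0 ≤ F c := by
        have hcw : ContinuousWithinAt F (Set.Ico s1 c) c :=
          (hFc c hcnn).mono (fun y hy => hs1'.trans hy.1)
        have hne : (𝓝[Set.Ico s1 c] c).NeBot := by
          refine mem_closure_iff_nhdsWithin_neBot.1 ?_
          rw [closure_Ico (ne_of_lt hclt)]
          exact ⟨hclt.le, le_refl _⟩
        refine ge_of_tendsto hcw ?_
        filter_upwards [self_mem_nhdsWithin] with rr hrr
        exact (hbelow rr hrr.1 hrr.2).le
      have hFc0 : F c = 0 := le_antisymm hcF hFcge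
      have hreg : ∀ rr ∈ Set.Icc s1 c, 0 ≤ F rr := by
        intro rr hrr
        rcases eq_or_lt_of_le hrr.2 with h | h
        · rw [h, hFc0]
        · exact (hbelow rr hrr.1 h).le
      have hKPR := KPR s1 c hs1' hclt hreg
      rw [hFc0] at hKPR
      have hFs1pos : 0 < F s1 := hbelow s1 (le_refl _) hclt
      rw [max_eq_left hFs1pos.le]
      rcases eq_or_lt_of_le hcmem.2 with hcs2 | hcs2
      · rw [← hcs2, max_eq_right (le_of_eq hFc0)]
        exact hKPR
      · have hFs2 : F s2 ≤ 0 := habove s2 hcs2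
        rw [max_eq_right hFs2]
        have := ganti_v 0 (le_refl 0) c hcnn s2 hcs2
        linarith
  · push_neg at hN
    have hreg : ∀ rr ∈ Set.Icc s1 s2, 0 ≤ F rr := fun rr hrr => (hN rr hrr).le
    have := KPR s1 s2 hs1' h12 hreg
    rw [max_eq_left (hN s1 ⟨le_refl _, h12.le⟩).le, max_eq_left (hN s2 ⟨h12.le, le_refl _⟩).le]
    exact this

lemma aux_prop {n : ℕ} (Ω : Set (Fin n → ℝ)) (hΩo : IsOpen Ω) (hΩb : Bornology.IsBounded Ω)
    (hΩc : IsConnected Ω)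
    (p : (Fin n → ℝ) → (Fin n → ℝ) → ℝ)
    (hpc : Continuous (Function.uncurry p)) (hpnn : ∀ x y, 0 ≤ p x y)
    (hpd : ∀ x, 0 < p x x)
    (w : (Fin n → ℝ) → ℝ) (hwc : ContinuousOn w (closure Ω))
    (hwnn : ∀ x ∈ closure Ω, 0 ≤ w x)
    (hH : ∀ x ∈ closure Ω, w x = 0 → (∫ y in Ω, p x y * w y) ≤ 0)
    (x0 : Fin n → ℝ) (hx0 : x0 ∈ closure Ω) (hw0 : w x0 = 0) :
    ∀ x ∈ closure Ω, w x = 0 := by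
  have hpx : ∀ x : Fin n → ℝ, Continuous (fun y => p x y) :=
    fun x => hpc.comp (continuous_const.prodMk continuous_id)
  have hint : ∀ x, IntegrableOn (fun y => p x y * w y) Ω volume := by
    intro x
    have h1 : ContinuousOn (fun y => p x y * w y) (closure Ω) :=
      ((hpx x).continuousOn).mul hwc
    exact (h1.integrableOn_compact hΩb.isCompact_closure).mono_set subset_closure
  have step1 : ∀ x ∈ closure Ω, w x = 0 → ∀ y ∈ Ω, p x y * w y = 0 := by
    intro x hx hwx y hy
    have hnn : ∀ z ∈ Ω, 0 ≤ p x z * w z := fun z hz =>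
      mul_nonneg (hpnn x z) (hwnn z (subset_closure hz))
    have hge : 0 ≤ ∫ y in Ω, p x y * w y := setIntegral_nonneg hΩo.measurableSet hnn
    have heq : (∫ y in Ω, p x y * w y) = 0 := le_antisymm (hH x hx hwx) hge
    by_contra hne
    have hpos : 0 < p x y * w y := lt_of_le_of_ne (hnn y hy) (Ne.symm hne)
    have hcΩ : ContinuousOn (fun z => p x z * w z) Ω :=
      (((hpx x).continuousOn).mul hwc).mono subset_closure
    have hU : IsOpen (Ω ∩ (fun z => p x z * w z) ⁻¹' {(0:ℝ)}ᶜ) :=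
      hcΩ.isOpen_inter_preimage hΩo (isOpen_compl_iff.2 isClosed_singleton)
    have hUne : (Ω ∩ (fun z => p x z * w z) ⁻¹' {(0:ℝ)}ᶜ).Nonempty :=
      ⟨y, hy, by simpa using hne⟩
    have hvolpos : 0 < volume (Ω ∩ (fun z => p x z * w z) ⁻¹' {(0:ℝ)}ᶜ) :=
      hU.measure_pos volume hUne
    have hsup : (Ω ∩ (fun z => p x z * w z) ⁻¹' {(0:ℝ)}ᶜ)
        ⊆ Function.support (fun z => p x z * w z) ∩ Ω := by
      intro z hz
      exact ⟨by simpa using hz.2, hz.1⟩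
    have hvolpos' : 0 < volume (Function.support (fun z => p x z * w z) ∩ Ω) :=
      lt_of_lt_of_le hvolpos (measure_mono hsup)
    have hae : 0 ≤ᵐ[volume.restrict Ω] fun z => p x z * w z := by
      filter_upwards [ae_restrict_mem hΩo.measurableSet] with z hz
      exact hnn z hz
    have := (setIntegral_pos_iff_support_of_nonneg_ae hae (hint x)).2 hvolpos'
    rw [heq] at this
    exact lt_irrefl 0 this
  -- zero set is open, closed and nonempty in Ω
  set Z : Set (Fin n → ℝ) := {y | y ∈ Ω ∧ w y = 0} with hZdef
  have hZne : Z.Nonempty := by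
    have hopen : IsOpen {y | 0 < p x0 y} := isOpen_lt continuous_const (hpx x0)
    have hx0mem : x0 ∈ {y | 0 < p x0 y} := hpd x0
    obtain ⟨y1, hy1P, hy1Ω⟩ := mem_closure_iff.1 hx0 _ hopen hx0mem
    have := step1 x0 hx0 hw0 y1 hy1Ω
    have hwy1 : w y1 = 0 := by
      rcases mul_eq_zero.1 this with h | h
      · exact absurd h (ne_of_gt hy1P)
      · exact h
    exact ⟨y1, hy1Ω, hwy1⟩
  have hZopen : IsOpen Z := by
    rw [isOpen_iff_mem_nhds]
    intro y hy
    have hyΩ : y ∈ Ω := hy.1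
    have hopen : IsOpen ({z | 0 < p y z} ∩ Ω) :=
      (isOpen_lt continuous_const (hpx y)).inter hΩo
    have hmem : y ∈ {z | 0 < p y z} ∩ Ω := ⟨hpd y, hyΩ⟩
    refine Filter.mem_of_superset (hopen.mem_nhds hmem) ?_
    intro z hz
    have := step1 y (subset_closure hyΩ) hy.2 z hz.2
    refine ⟨hz.2, ?_⟩
    rcases mul_eq_zero.1 this with h | h
    · exact absurd h (ne_of_gt hz.1)
    · exact h
  have hVopen : IsOpen (Ω ∩ w ⁻¹' {(0:ℝ)}ᶜ) :=
    (hwc.mono subset_closure).isOpen_inter_preimage hΩo (isOpen_compl_iff.2 isClosed_singleton)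
  have hzero : ∀ y ∈ Ω, w y = 0 := by
    intro y hy
    by_contra hne
    have hpre := hΩc.isPreconnected
    have hcover : Ω ⊆ Z ∪ (Ω ∩ w ⁻¹' {(0:ℝ)}ᶜ) := by
      intro z hz
      by_cases h : w z = 0
      · exact Or.inl ⟨hz, h⟩
      · exact Or.inr ⟨hz, by simpa using h⟩
    have hne1 : (Ω ∩ Z).Nonempty := by
      obtain ⟨z, hz⟩ := hZne
      exact ⟨z, hz.1, hz⟩
    have hne2 : (Ω ∩ (Ω ∩ w ⁻¹' {(0:ℝ)}ᶜ)).Nonempty := ⟨y, hy, hy, by simpa using hne⟩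
    obtain ⟨z, hzΩ, hz1, hz2⟩ := hpre Z (Ω ∩ w ⁻¹' {(0:ℝ)}ᶜ) hZopen hVopen hcover hne1 hne2
    exact (by simpa using hz2.2 : w z ≠ 0) hz1.2
  intro x hx
  have h1 : ContinuousWithinAt w Ω x := (hwc x hx).mono subset_closure
  have h2 : Filter.Tendsto w (nhdsWithin x Ω) (nhds (w x)) := h1
  have h3 : Filter.Tendsto w (nhdsWithin x Ω) (nhds 0) := by
    refine Filter.Tendsto.congr' ?_ tendsto_const_nhds
    filter_upwards [self_mem_nhdsWithin] with z hz
    exact (hzero z hz).symm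
  have hnb : (nhdsWithin x Ω).NeBot := mem_closure_iff_nhdsWithin_neBot.1 hx
  exact tendsto_nhds_unique h2 h3

theorem stmt_9
    {n : ℕ} (hn : 1 ≤ n)
    (Ω : Set (Fin n → ℝ)) (hΩo : IsOpen Ω) (hΩb : Bornology.IsBounded Ω)
    (hΩc : IsConnected Ω)
    (p : (Fin n → ℝ) → (Fin n → ℝ) → ℝ)
    (hpc : Continuous (Function.uncurry p)) (hpnn : ∀ x y, 0 ≤ p x y)
    (hpd : ∀ x, 0 < p x x)
    (hp1 : ∀ x, (∫ y, p x y) = 1) (hp2 : ∀ x, (∫ y, p y x) = 1)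
    (f g fu fv gu gv : (Fin n → ℝ) → ℝ → ℝ → ℝ)
    (hdfu : ∀ x ∈ closure Ω, ∀ u ∈ Set.Ici (0:ℝ), ∀ v ∈ Set.Ici (0:ℝ),
      HasDerivWithinAt (fun s => f x s v) (fu x u v) (Set.Ici 0) u)
    (hdfv : ∀ x ∈ closure Ω, ∀ u ∈ Set.Ici (0:ℝ), ∀ v ∈ Set.Ici (0:ℝ),
      HasDerivWithinAt (fun s => f x u s) (fv x u v) (Set.Ici 0) v)
    (hdgu : ∀ x ∈ closure Ω, ∀ u ∈ Set.Ici (0:ℝ), ∀ v ∈ Set.Ici (0:ℝ),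
      HasDerivWithinAt (fun s => g x s v) (gu x u v) (Set.Ici 0) u)
    (hdgv : ∀ x ∈ closure Ω, ∀ u ∈ Set.Ici (0:ℝ), ∀ v ∈ Set.Ici (0:ℝ),
      HasDerivWithinAt (fun s => g x u s) (gv x u v) (Set.Ici 0) v)
    (hfcont : ContinuousOn (fun q : (Fin n → ℝ) × ℝ × ℝ => f q.1 q.2.1 q.2.2)
      ((closure Ω) ×ˢ (Set.Ici 0 ×ˢ Set.Ici 0)))
    (hgcont : ContinuousOn (fun q : (Fin n → ℝ) × ℝ × ℝ => g q.1 q.2.1 q.2.2)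
      ((closure Ω) ×ˢ (Set.Ici 0 ×ˢ Set.Ici 0)))
    (hfucont : ContinuousOn (fun q : (Fin n → ℝ) × ℝ × ℝ => fu q.1 q.2.1 q.2.2)
      ((closure Ω) ×ˢ (Set.Ici 0 ×ˢ Set.Ici 0)))
    (hfvcont : ContinuousOn (fun q : (Fin n → ℝ) × ℝ × ℝ => fv q.1 q.2.1 q.2.2)
      ((closure Ω) ×ˢ (Set.Ici 0 ×ˢ Set.Ici 0)))
    (hgucont : ContinuousOn (fun q : (Fin n → ℝ) × ℝ × ℝ => gu q.1 q.2.1 q.2.2)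
      ((closure Ω) ×ˢ (Set.Ici 0 ×ˢ Set.Ici 0)))
    (hgvcont : ContinuousOn (fun q : (Fin n → ℝ) × ℝ × ℝ => gv q.1 q.2.1 q.2.2)
      ((closure Ω) ×ˢ (Set.Ici 0 ×ˢ Set.Ici 0)))
    (hA2 : ∀ x ∈ closure Ω, ∀ u ∈ Set.Ici (0:ℝ), ∀ v ∈ Set.Ici (0:ℝ),
      fu x u v < 0 ∧ gv x u v < 0)
    (hA3 : ∀ x ∈ closure Ω, ∀ u ∈ Set.Ici (0:ℝ), ∀ v ∈ Set.Ici (0:ℝ),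
      fv x u v < 0 ∧ gu x u v < 0)
    (hA5 : ∀ x ∈ closure Ω, ∀ u ∈ Set.Ici (0:ℝ), ∀ v ∈ Set.Ici (0:ℝ),
      fv x u v * gu x u v < fu x u v * gv x u v)
    (F : (Fin n → ℝ) → ℝ → ℝ)
    (hFcont : ContinuousOn (fun q : (Fin n → ℝ) × ℝ => F q.1 q.2) ((closure Ω) ×ˢ Set.Ici 0))
    (hF : ∀ x ∈ closure Ω, ∀ v ∈ Set.Ici (0:ℝ), f x (F x v) v = 0)
    (D : ℝ) (hD : 0 < D)
    (vstar v : (Fin n → ℝ) → ℝ)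
    (hvc : ContinuousOn v (closure Ω)) (hvnn : ∀ x ∈ closure Ω, 0 ≤ v x)
    (hvne : ∃ x ∈ closure Ω, v x ≠ 0)
    (hsub : ∀ x ∈ closure Ω,
      0 ≤ D * ((∫ y in Ω, p x y * v y) - v x) + v x * g x (max (F x (v x)) 0) (v x))
    (hvsc : ContinuousOn vstar (closure Ω)) (hvsnn : ∀ x ∈ closure Ω, 0 ≤ vstar x)
    (hvsne : ∃ x ∈ closure Ω, vstar x ≠ 0)
    (hsup : ∀ x ∈ closure Ω,
      D * ((∫ y in Ω, p x y * vstar y) - vstar x)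
        + vstar x * g x (max (F x (vstar x)) 0) (vstar x) ≤ 0)
 :
    (∀ x ∈ closure Ω, v x < vstar x) ∨ (∀ x ∈ closure Ω, vstar x = v x) := by
  have hK : IsCompact (closure Ω) := hΩb.isCompact_closure
  have hKne : (closure Ω).Nonempty := hΩc.nonempty.closure
  have hGanti : ∀ x ∈ closure Ω,
      StrictAntiOn (fun s => g x (max (F x s) 0) s) (Set.Ici 0) := by
    intro x hx
    have hemb : Continuous (fun q : ℝ × ℝ => ((x, q) : (Fin n → ℝ) × ℝ × ℝ)) :=
      continuous_const.prodMk continuous_id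
    have hmap : Set.MapsTo (fun q : ℝ × ℝ => ((x, q) : (Fin n → ℝ) × ℝ × ℝ))
        (Set.Ici 0 ×ˢ Set.Ici 0) ((closure Ω) ×ˢ (Set.Ici 0 ×ˢ Set.Ici 0)) :=
      fun q hq => ⟨hx, hq⟩
    have hembF : Continuous (fun s : ℝ => ((x, s) : (Fin n → ℝ) × ℝ)) :=
      continuous_const.prodMk continuous_id
    have hmapF : Set.MapsTo (fun s : ℝ => ((x, s) : (Fin n → ℝ) × ℝ))
        (Set.Ici 0) ((closure Ω) ×ˢ Set.Ici 0) := fun s hs => ⟨hx, hs⟩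
    exact aux_G (f x) (g x) (fu x) (fv x) (gu x) (gv x) (F x)
      (fun v' hv' u hu => hdfu x hx u hu v' hv')
      (fun u hu v' hv' => hdfv x hx u hu v' hv')
      (fun v' hv' u hu => hdgu x hx u hu v' hv')
      (fun u hu v' hv' => hdgv x hx u hu v' hv')
      (fun u hu v' hv' => (hA2 x hx u hu v' hv').1)
      (fun u hu v' hv' => (hA3 x hx u hu v' hv').1)
      (fun u hu v' hv' => (hA2 x hx u hu v' hv').2)
      (fun u hu v' hv' => hA5 x hx u hu v' hv')
      (hfucont.comp hemb.continuousOn hmap)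
      (hfvcont.comp hemb.continuousOn hmap)
      (hgucont.comp hemb.continuousOn hmap)
      (hgvcont.comp hemb.continuousOn hmap)
      (hgcont.comp hemb.continuousOn hmap)
      (hFcont.comp hembF.continuousOn hmapF)
      (fun v' hv' => hF x hx v' hv')
  have hvspos : ∀ x ∈ closure Ω, 0 < vstar x := by
    intro x hx
    rcases (hvsnn x hx).lt_or_eq with h | h
    · exact h
    · exfalso
      have hall := aux_prop Ω hΩo hΩb hΩc p hpc hpnn hpd vstar hvsc hvsnn
        (by
          intro z hz hwz
          have h1 := hsup z hz
          rw [hwz] at h1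
          nlinarith [h1, hD]) x hx h.symm
      obtain ⟨x1, hx1, hx1ne⟩ := hvsne
      exact hx1ne (hall x1 hx1)
  obtain ⟨xc, hxc, hxcmin⟩ := hK.exists_isMinOn hKne hvsc
  have hcpos : 0 < vstar xc := hvspos xc hxc
  have hcle : ∀ x ∈ closure Ω, vstar xc ≤ vstar x := fun x hx => isMinOn_iff.1 hxcmin x hx
  obtain ⟨x1, hx1, hx1ne⟩ := hvne
  have hvx1 : 0 < v x1 := (hvnn x1 hx1).lt_of_ne (Ne.symm hx1ne)
  set r1 : ℝ := vstar x1 / v x1 with hr1def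
  have hr1pos : 0 < r1 := div_pos (hvspos x1 hx1) hvx1
  set θ : ℝ := vstar xc / r1 with hθdef
  have hθpos : 0 < θ := div_pos hcpos hr1pos
  set A : Set (Fin n → ℝ) := closure Ω ∩ v ⁻¹' (Set.Ici θ) with hAdef
  have hAclosed : IsClosed A :=
    hvc.preimage_isClosed_of_isClosed isClosed_closure isClosed_Ici
  have hAsub : A ⊆ closure Ω := Set.inter_subset_left
  have hAcomp : IsCompact A := hK.of_isClosed_subset hAclosed hAsub
  have hx1A : x1 ∈ A := by
    refine ⟨hx1, ?_⟩
    show θ ≤ v x1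
    rw [hθdef, div_le_iff₀ hr1pos]
    have heq1 : v x1 * r1 = vstar x1 := by
      rw [hr1def]; field_simp
    rw [heq1]
    exact hcle x1 hx1
  have hAne : A.Nonempty := ⟨x1, hx1A⟩
  have hvposA : ∀ x ∈ A, 0 < v x := fun x hx => lt_of_lt_of_le hθpos hx.2
  have hρcont : ContinuousOn (fun x => vstar x / v x) A :=
    (hvsc.mono hAsub).div (hvc.mono hAsub) (fun x hx => (hvposA x hx).ne')
  obtain ⟨x0, hx0A, hx0min⟩ := hAcomp.exists_isMinOn hAne hρcont
  set τ : ℝ := vstar x0 / v x0 with hτdef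
  have hx0K : x0 ∈ closure Ω := hAsub hx0A
  have hvx0 : 0 < v x0 := hvposA x0 hx0A
  have hτpos : 0 < τ := div_pos (hvspos x0 hx0K) hvx0
  have hτminA : ∀ x ∈ A, τ ≤ vstar x / v x := fun x hx => isMinOn_iff.1 hx0min x hx
  have hτler1 : τ ≤ r1 := hτminA x1 hx1A
  have hτratio : ∀ x ∈ closure Ω, 0 < v x → τ ≤ vstar x / v x := by
    intro x hx hvx
    by_cases hA' : θ ≤ v x
    · exact hτminA x ⟨hx, hA'⟩
    · push_neg at hA'
      rw [hθdef] at hA'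
      have h1 : v x * r1 < vstar xc := (lt_div_iff₀ hr1pos).1 hA'
      have h2 : vstar xc ≤ vstar x := hcle x hx
      rw [le_div_iff₀ hvx]
      nlinarith [hτler1, hvx, h1, h2]
  have hτv : ∀ x ∈ closure Ω, τ * v x ≤ vstar x := by
    intro x hx
    rcases (hvnn x hx).eq_or_lt with h | h
    · rw [← h, mul_zero]; exact (hvspos x hx).le
    · have := hτratio x hx h
      rw [le_div_iff₀ h] at this
      exact this
  by_cases hfirst : ∀ x ∈ closure Ω, v x < vstar x
  · exact Or.inl hfirst
  right
  push_neg at hfirst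
  obtain ⟨xb, hxb, hxble⟩ := hfirst
  have hvxb : 0 < v xb := lt_of_lt_of_le (hvspos xb hxb) hxble
  have hτ1 : τ ≤ 1 := by
    have h3 := hτratio xb hxb hvxb
    rw [le_div_iff₀ hvxb] at h3
    nlinarith [h3, hvxb, hxble]
  set w : (Fin n → ℝ) → ℝ := fun x => vstar x - τ * v x with hwdef
  have hwcont : ContinuousOn w (closure Ω) := hvsc.sub (continuousOn_const.mul hvc)
  have hwnn : ∀ x ∈ closure Ω, 0 ≤ w x := fun x hx => sub_nonneg.2 (hτv x hx)
  have hw0 : w x0 = 0 := by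
    show vstar x0 - τ * v x0 = 0
    rw [hτdef]
    field_simp
    ring
  have hint : ∀ (u : (Fin n → ℝ) → ℝ), ContinuousOn u (closure Ω) →
      ∀ x, IntegrableOn (fun y => p x y * u y) Ω volume := by
    intro u hu x
    have h1 : ContinuousOn (fun y => p x y * u y) (closure Ω) :=
      ((hpc.comp (continuous_const.prodMk continuous_id)).continuousOn).mul hu
    exact (h1.integrableOn_compact hΩb.isCompact_closure).mono_set subset_closure
  have hH : ∀ x ∈ closure Ω, w x = 0 → (∫ y in Ω, p x y * w y) ≤ 0 := by
    intro x hx hwx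
    have hxeq : vstar x = τ * v x := by
      have h0 : vstar x - τ * v x = 0 := hwx
      linarith
    have hIw : (∫ y in Ω, p x y * w y)
        = (∫ y in Ω, p x y * vstar y) - τ * ∫ y in Ω, p x y * v y := by
      calc (∫ y in Ω, p x y * w y)
          = ∫ y in Ω, (p x y * vstar y - τ * (p x y * v y)) := by
            refine setIntegral_congr_fun hΩo.measurableSet (fun y _ => ?_)
            show p x y * (vstar y - τ * v y) = _
            ring
        _ = (∫ y in Ω, p x y * vstar y) - ∫ y in Ω, τ * (p x y * v y) :=
            integral_sub (hint vstar hvsc x) ((hint v hvc x).const_mul τ)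
        _ = (∫ y in Ω, p x y * vstar y) - τ * ∫ y in Ω, p x y * v y := by
            rw [integral_const_mul]
    have h1 := hsup x hx
    have h2 := hsub x hx
    have hvnnx := hvnn x hx
    have hτvx : (0:ℝ) ≤ τ * v x := mul_nonneg hτpos.le hvnnx
    have hτvlev : τ * v x ≤ v x := by nlinarith [hτ1, hvnnx]
    have hanti : g x (max (F x (v x)) 0) (v x) ≤ g x (max (F x (τ * v x)) 0) (τ * v x) := by
      rcases eq_or_lt_of_le hτvlev with h | h
      · rw [h]
      · exact (hGanti x hx (Set.mem_Ici.2 hτvx) (Set.mem_Ici.2 hvnnx) h).le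
    rw [hxeq] at h1
    rw [hIw]
    have h2τ : 0 ≤ τ * (D * ((∫ y in Ω, p x y * v y) - v x)
        + v x * g x (max (F x (v x)) 0) (v x)) := mul_nonneg hτpos.le h2
    have hGG : τ * v x * g x (max (F x (v x)) 0) (v x)
        ≤ τ * v x * g x (max (F x (τ * v x)) 0) (τ * v x) :=
      mul_le_mul_of_nonneg_left hanti hτvx
    nlinarith [h1, h2τ, hGG, hD]
  have hwzero := aux_prop Ω hΩo hΩb hΩc p hpc hpnn hpd w hwcont hwnn hH x0 hx0K hw0
  by_cases hτlt : τ < 1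
  · exfalso
    have hvs_eq : ∀ y ∈ closure Ω, vstar y = τ * v y := by
      intro y hy
      have h0 : vstar y - τ * v y = 0 := hwzero y hy
      linarith
    have h1 := hsup x0 hx0K
    have h2 := hsub x0 hx0K
    have hIeq : (∫ y in Ω, p x0 y * vstar y) = τ * ∫ y in Ω, p x0 y * v y := by
      calc (∫ y in Ω, p x0 y * vstar y) = ∫ y in Ω, τ * (p x0 y * v y) := by
            refine setIntegral_congr_fun hΩo.measurableSet (fun y hy => ?_)
            show p x0 y * vstar y = _
            rw [hvs_eq y (subset_closure hy)]
            ring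
        _ = τ * ∫ y in Ω, p x0 y * v y := integral_const_mul τ _
    rw [hIeq, hvs_eq x0 hx0K] at h1
    have hτvlt : τ * v x0 < v x0 := by nlinarith [hτlt, hvx0]
    have hstrict : g x0 (max (F x0 (v x0)) 0) (v x0)
        < g x0 (max (F x0 (τ * v x0)) 0) (τ * v x0) :=
      hGanti x0 hx0K (Set.mem_Ici.2 (mul_nonneg hτpos.le (hvnn x0 hx0K)))
        (Set.mem_Ici.2 (hvnn x0 hx0K)) hτvlt
    have h2τ : 0 ≤ τ * (D * ((∫ y in Ω, p x0 y * v y) - v x0)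
        + v x0 * g x0 (max (F x0 (v x0)) 0) (v x0)) := mul_nonneg hτpos.le h2
    have hGGs : τ * v x0 * g x0 (max (F x0 (v x0)) 0) (v x0)
        < τ * v x0 * g x0 (max (F x0 (τ * v x0)) 0) (τ * v x0) :=
      mul_lt_mul_of_pos_left hstrict (mul_pos hτpos hvx0)
    nlinarith [h1, h2τ, hGGs]
  · have hτeq : τ = 1 := le_antisymm hτ1 (not_lt.1 hτlt)
    intro x hx
    have h0 : vstar x - τ * v x = 0 := hwzero x hx
    rw [hτeq] at h0
    linarith
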